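/- For all constants C, c > 0 there exists N ∈ ℕ such that the following holds for all n ≥ N and all ε, ρ ∈ (0,1] satisfying ρ ≥ (c/C)^{2/3} · (log n)^{2/3} / (n^{1/3} ε^{4/3}). Set η = 1 − ρ and m = c · √n · (log n)² / (ε² ρ^{3/2}). If μ is a probability vector on {0,…,n−1} with ‖μ‖_∞ ≤ C·log(n)/m and total variation distance from the uniform distribution greater than ε (i.e. (1/2)·Σ_i |μ_i − 1/n| > ε), then, with z = μ − ν and ν = (1/n,…,1/n), it holds that μᵀ A(n,η) μ > νᵀ A(n,η) ν + (ρ/8)·‖z‖₂². -/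

import Mathlib

open scoped BigOperators
open Finset

private lemma natAbs_sub_of_le'' {i j : ℕ} (h : i ≤ j) : ((i : ℤ) - (j : ℤ)).natAbs = j - i := by
  omega

private lemma natAbs_comm''' (i j : ℕ) : ((i : ℤ) - (j : ℤ)).natAbs = ((j : ℤ) - (i : ℤ)).natAbs := by
  omega

private lemma quad_lower' (n : ℕ) (η : ℝ) (hη0 : 0 ≤ η) (hη1 : η ≤ 1) (z : ℕ → ℝ) :
    ((1 - η) / 2) * ∑ i ∈ range n, (z i) ^ 2 ≤
      ∑ i ∈ range n, ∑ j ∈ range n, z i * η ^ (((i : ℤ) - (j : ℤ)).natAbs) * z j := by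
  set S : ℕ → ℝ := fun k => ∑ i ∈ Ico k n, η ^ (i - k) * z i with hS
  have hSn : S n = 0 := by simp [hS]
  have hrec : ∀ k, k < n → S k = z k + η * S (k + 1) := by
    intro k hk
    rw [hS]
    simp only
    rw [Finset.sum_eq_sum_Ico_succ_bot hk]
    simp only [Nat.sub_self, pow_zero, one_mul]
    congr 1
    rw [Finset.mul_sum]
    apply Finset.sum_congr rfl
    intro i hi
    simp only [Finset.mem_Ico] at hi
    have : i - k = (i - (k + 1)) + 1 := by omega
    rw [this, pow_succ]
    ring
  set D : ℝ := ∑ i ∈ range n, (z i) ^ 2 with hD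
  set T : ℝ := ∑ k ∈ range n, z k * S k with hT
  have hQ : ∑ i ∈ range n, ∑ j ∈ range n, z i * η ^ (((i : ℤ) - (j : ℤ)).natAbs) * z j
      = 2 * T - D := by
    have hsplit : ∀ i ∈ range n,
        ∑ j ∈ range n, z i * η ^ (((i : ℤ) - (j : ℤ)).natAbs) * z j
        = (∑ j ∈ Ico 0 i, z i * η ^ (((i : ℤ) - (j : ℤ)).natAbs) * z j)
          + ∑ j ∈ Ico i n, z i * η ^ (((i : ℤ) - (j : ℤ)).natAbs) * z j := by
      intro i hi
      simp only [Finset.mem_range] at hi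
      rw [Finset.range_eq_Ico, ← Finset.sum_Ico_consecutive _ (Nat.zero_le i) (le_of_lt hi)]
    rw [Finset.sum_congr rfl hsplit, Finset.sum_add_distrib]
    have h2 : ∑ i ∈ range n, ∑ j ∈ Ico i n, z i * η ^ (((i : ℤ) - (j : ℤ)).natAbs) * z j = T := by
      rw [hT]
      apply Finset.sum_congr rfl
      intro i _
      rw [Finset.mul_sum]
      apply Finset.sum_congr rfl
      intro j hj
      simp only [Finset.mem_Ico] at hj
      rw [natAbs_sub_of_le'' hj.1]
      ring
    have h1 : ∑ i ∈ range n, ∑ j ∈ Ico 0 i, z i * η ^ (((i : ℤ) - (j : ℤ)).natAbs) * z j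
        = T - D := by
      have hswap : ∑ i ∈ range n, ∑ j ∈ Ico 0 i, z i * η ^ (((i : ℤ) - (j : ℤ)).natAbs) * z j
          = ∑ j ∈ range n, ∑ i ∈ Ico (j+1) n, z i * η ^ (((i : ℤ) - (j : ℤ)).natAbs) * z j := by
        apply Finset.sum_comm'
        intro x y
        simp only [Finset.mem_range, Finset.mem_Ico]
        omega
      rw [hswap, hT]
      have : ∀ j ∈ range n, z j * S j
          = z j * (η ^ 0 * z j) + ∑ i ∈ Ico (j+1) n, z i * η ^ (((i : ℤ) - (j : ℤ)).natAbs) * z j := by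
        intro j hj
        simp only [Finset.mem_range] at hj
        rw [hS]
        simp only
        rw [Finset.mul_sum, Finset.sum_eq_sum_Ico_succ_bot hj, Nat.sub_self]
        congr 1
        apply Finset.sum_congr rfl
        intro i hi
        simp only [Finset.mem_Ico] at hi
        rw [natAbs_comm''', natAbs_sub_of_le'' (by omega : j ≤ i)]
        ring
      rw [Finset.sum_congr rfl this, Finset.sum_add_distrib]
      simp only [pow_zero, one_mul]
      have : ∑ j ∈ range n, z j * z j = D := by
        rw [hD]; apply Finset.sum_congr rfl; intro j _; ring
      rw [this]; ring
    rw [h1, h2]; ring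
  have hTS : ∑ k ∈ range n, ((S k) ^ 2 - η ^ 2 * (S (k+1)) ^ 2) = 2 * T - D := by
    have : ∀ k ∈ range n, (S k) ^ 2 - η ^ 2 * (S (k+1)) ^ 2
        = 2 * (z k * S k) - (z k) ^ 2 := by
      intro k hk
      simp only [Finset.mem_range] at hk
      linear_combination (S k - z k + η * S (k+1)) * (hrec k hk)
    rw [Finset.sum_congr rfl this, Finset.sum_sub_distrib, ← Finset.mul_sum]
  set X : ℝ := ∑ k ∈ range n, (S k) ^ 2 with hX
  set X' : ℝ := ∑ k ∈ range n, (S (k+1)) ^ 2 with hX'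
  have hX'X : X' ≤ X := by
    have : X - X' = (S 0) ^ 2 - (S n) ^ 2 := by
      rw [hX, hX', ← Finset.sum_sub_distrib]
      exact Finset.sum_range_sub' (fun k => (S k) ^ 2) n
    nlinarith [sq_nonneg (S 0), hSn]
  have hX0 : 0 ≤ X := Finset.sum_nonneg (fun k _ => sq_nonneg _)
  have hQX : (1 - η ^ 2) * X ≤ 2 * T - D := by
    rw [← hTS]
    have : ∑ k ∈ range n, ((S k) ^ 2 - η ^ 2 * (S (k+1)) ^ 2) = X - η ^ 2 * X' := by
      rw [hX, hX', Finset.sum_sub_distrib, ← Finset.mul_sum]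
    rw [this]
    nlinarith [sq_nonneg η]
  have hDX : D ≤ (1 + η) ^ 2 * X := by
    have hptw : ∀ k ∈ range n, (z k) ^ 2 ≤ (1 + η) * (S k) ^ 2 + η * (1 + η) * (S (k+1)) ^ 2 := by
      intro k hk
      simp only [Finset.mem_range] at hk
      have hz : z k = S k - η * S (k+1) := by linarith [hrec k hk]
      rw [hz]
      nlinarith [mul_nonneg hη0 (sq_nonneg (S k + S (k+1)))]
    calc D ≤ ∑ k ∈ range n, ((1 + η) * (S k) ^ 2 + η * (1 + η) * (S (k+1)) ^ 2) :=
            Finset.sum_le_sum hptw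
      _ = (1 + η) * X + η * (1 + η) * X' := by
            rw [Finset.sum_add_distrib, ← Finset.mul_sum, ← Finset.mul_sum]
      _ ≤ (1 + η) * X + η * (1 + η) * X := by
            have : 0 ≤ η * (1 + η) := by nlinarith
            nlinarith [hX'X]
      _ = (1 + η) ^ 2 * X := by ring
  rw [hQ]
  nlinarith [mul_nonneg (mul_nonneg (sub_nonneg.2 hη1) (sq_nonneg (1 - η))) hX0,
    mul_nonneg (sub_nonneg.2 hη1) hX0]

private lemma rowsum_eq' (n : ℕ) (η : ℝ) (hη1 : η < 1) (j : ℕ) (hj : j < n) :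
    ∑ i ∈ range n, η ^ (((i : ℤ) - (j : ℤ)).natAbs)
      = (1 + η - η ^ (j+1) - η ^ (n - j)) / (1 - η) := by
  have hne : η ≠ 1 := ne_of_lt hη1
  have hsub : (1:ℝ) - η ≠ 0 := by intro h; apply hne; linarith
  rw [range_eq_Ico, ← Finset.sum_Ico_consecutive _ (Nat.zero_le (j+1)) hj]
  have h1 : ∑ i ∈ Ico 0 (j+1), η ^ (((i : ℤ) - (j : ℤ)).natAbs)
      = (η ^ (j+1) - 1) / (η - 1) := by
    rw [← range_eq_Ico]
    have : ∀ i ∈ range (j+1), η ^ (((i : ℤ) - (j : ℤ)).natAbs) = η ^ (j - i) := by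
      intro i hi
      simp only [mem_range] at hi
      rw [natAbs_sub_of_le'' (by omega : i ≤ j)]
    rw [Finset.sum_congr rfl this]
    have hr := Finset.sum_range_reflect (fun i => η ^ i) (j+1)
    have : ∀ i ∈ range (j+1), η ^ (j - i) = η ^ (j + 1 - 1 - i) := by
      intro i hi; congr 1 <;> omega
    rw [Finset.sum_congr rfl this, hr, geom_sum_eq hne]
  have h2 : ∑ i ∈ Ico (j+1) n, η ^ (((i : ℤ) - (j : ℤ)).natAbs)
      = η * ((η ^ (n - j - 1) - 1) / (η - 1)) := by
    rw [Finset.sum_Ico_eq_sum_range]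
    have : ∀ k ∈ range (n - (j+1)), η ^ (((((j+1+k) : ℕ) : ℤ) - (j : ℤ)).natAbs) = η * η ^ k := by
      intro k hk
      rw [natAbs_comm''', natAbs_sub_of_le'' (by omega : j ≤ j+1+k)]
      have : j + 1 + k - j = k + 1 := by omega
      rw [this, pow_succ]; ring
    rw [Finset.sum_congr rfl this, ← Finset.mul_sum]
    congr 1
    have : n - (j+1) = n - j - 1 := by omega
    rw [this, geom_sum_eq hne]
  have hpow : η ^ (n - j) = η ^ (n - j - 1) * η := by
    rw [← pow_succ]; congr 1; omega
  rw [h1, h2, hpow]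
  have hne' : η - 1 ≠ 0 := by intro h; apply hne; linarith
  field_simp
  ring

private lemma cross_bound' (n : ℕ) (η : ℝ) (hη0 : 0 ≤ η) (hη1 : η < 1)
    (z : ℕ → ℝ) (M : ℝ) (hM0 : 0 ≤ M) (hzM : ∀ j ∈ range n, z j ≤ M)
    (hz0 : ∑ j ∈ range n, z j = 0) :
    -(2 * M / (1 - η) ^ 2) ≤
      ∑ j ∈ range n, (∑ i ∈ range n, η ^ (((i : ℤ) - (j : ℤ)).natAbs)) * z j := by
  have hsub : (0:ℝ) < 1 - η := by linarith
  set K : ℝ := (1 + η) / (1 - η) with hK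
  set d : ℕ → ℝ := fun j => (η ^ (j+1) + η ^ (n - j)) / (1 - η) with hd
  have hrd : ∀ j ∈ range n, (∑ i ∈ range n, η ^ (((i : ℤ) - (j : ℤ)).natAbs)) = K - d j := by
    intro j hj
    simp only [mem_range] at hj
    rw [rowsum_eq' n η hη1 j hj, hK, hd]
    simp only
    field_simp
    ring
  have hd0 : ∀ j, 0 ≤ d j := by
    intro j
    apply div_nonneg _ (le_of_lt hsub)
    positivity
  have hdsum : ∑ j ∈ range n, d j ≤ 2 / (1 - η) ^ 2 := by
    have hgeom : ∑ i ∈ range n, η ^ i ≤ 1 / (1 - η) := by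
      rw [geom_sum_eq (ne_of_lt hη1)]
      have heq : (η ^ n - 1) / (η - 1) = (1 - η ^ n) / (1 - η) := by
        rw [div_eq_div_iff (by intro h; apply (ne_of_lt hη1); linarith) (by linarith)]
        ring
      rw [heq, div_le_div_iff₀ hsub hsub]
      nlinarith [mul_nonneg (pow_nonneg hη0 n) hsub.le]
    have h1 : ∑ j ∈ range n, η ^ (j+1) ≤ 1 / (1 - η) := by
      have : ∑ j ∈ range n, η ^ (j+1) = η * ∑ j ∈ range n, η ^ j := by
        rw [Finset.mul_sum]
        apply Finset.sum_congr rfl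
        intro j _; rw [pow_succ]; ring
      rw [this]
      calc η * ∑ j ∈ range n, η ^ j ≤ 1 * (1 / (1 - η)) := by
            apply mul_le_mul (by linarith) hgeom _ (by norm_num)
            apply Finset.sum_nonneg; intro i _; positivity
        _ = 1 / (1 - η) := by ring
    have h2 : ∑ j ∈ range n, η ^ (n - j) = ∑ j ∈ range n, η ^ (j+1) := by
      rw [← Finset.sum_range_reflect (fun j => η ^ (j+1)) n]
      apply Finset.sum_congr rfl
      intro j hj
      simp only [mem_range] at hj
      congr 1; omega
    have : ∑ j ∈ range n, d j = (∑ j ∈ range n, η ^ (j+1) + ∑ j ∈ range n, η ^ (n - j)) / (1 - η) := by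
      rw [hd, ← Finset.sum_add_distrib, Finset.sum_div]
    rw [this, h2]
    rw [div_le_div_iff₀ hsub (by positivity)]
    have h3 : ∑ j ∈ range n, η ^ (j+1) + ∑ j ∈ range n, η ^ (j+1) ≤ 2 / (1 - η) := by
      have : 2 / (1 - η) = 1 / (1 - η) + 1 / (1 - η) := by ring
      linarith
    calc (∑ j ∈ range n, η ^ (j+1) + ∑ j ∈ range n, η ^ (j+1)) * (1 - η) ^ 2
        ≤ (2 / (1 - η)) * (1 - η) ^ 2 := by
          apply mul_le_mul_of_nonneg_right h3 (by positivity)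
      _ = 2 * (1 - η) := by field_simp
  have hmain : ∑ j ∈ range n, (∑ i ∈ range n, η ^ (((i : ℤ) - (j : ℤ)).natAbs)) * z j
      = - ∑ j ∈ range n, d j * z j := by
    rw [Finset.sum_congr rfl (fun j hj => by rw [hrd j hj])]
    have : ∀ j ∈ range n, (K - d j) * z j = K * z j - d j * z j := fun j _ => by ring
    rw [Finset.sum_congr rfl this, Finset.sum_sub_distrib, ← Finset.mul_sum, hz0]
    ring
  rw [hmain]
  have : ∑ j ∈ range n, d j * z j ≤ 2 * M / (1 - η) ^ 2 := by
    calc ∑ j ∈ range n, d j * z j ≤ ∑ j ∈ range n, d j * M := by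
          apply Finset.sum_le_sum
          intro j hj
          exact mul_le_mul_of_nonneg_left (hzM j hj) (hd0 j)
      _ = (∑ j ∈ range n, d j) * M := by rw [Finset.sum_mul]
      _ ≤ (2 / (1 - η) ^ 2) * M := mul_le_mul_of_nonneg_right hdsum hM0
      _ = 2 * M / (1 - η) ^ 2 := by ring
  linarith


private lemma numeric8' (C c ε sn ln r M : ℝ) (hC : 0 < C) (hc : 0 < c)
    (hε0 : 0 < ε) (hε1 : ε ≤ 1) (hsn0 : 0 < sn) (hln0 : 0 < ln) (hr0 : 0 < r)
    (hln : 2 * C / c + 2 ≤ ln) (hr1 : c / C * ln / (sn * ε ^ 2) ≤ r)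
    (hMeq : M = C * ε ^ 2 * r / (c * sn * ln)) :
    8 * M ≤ 3 * (r * r) * ε ^ 2 := by
  have hsnε : 0 < sn * ε ^ 2 := mul_pos hsn0 (pow_pos hε0 2)
  have h1' : c / C * ln / sn ≤ r := by
    refine le_trans ?_ hr1
    apply div_le_div_of_nonneg_left (by positivity) hsnε
    nlinarith [pow_le_one₀ (le_of_lt hε0) hε1 (n := 2), hsn0]
  have h4' : c * ln ≤ C * (r * sn) := by
    have h := (div_le_iff₀ hsn0).mp h1'
    have h2 := mul_le_mul_of_nonneg_left h hC.le
    calc c * ln = C * (c / C * ln) := by field_simp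
      _ ≤ C * (r * sn) := h2
  have hcl : 2 * C + 2 * c ≤ c * ln := by
    have := mul_le_mul_of_nonneg_left hln hc.le
    calc 2 * C + 2 * c = c * (2 * C / c + 2) := by field_simp
      _ ≤ c * ln := this
  have h3c : 4 * C * C ≤ c * ln * (c * ln) := by nlinarith [hC, hc]
  have h5 : 8 * C ≤ 3 * r * (c * sn * ln) := by
    have hcln : 0 ≤ c * ln := (mul_pos hc hln0).le
    have h6 := mul_le_mul_of_nonneg_left h4' hcln
    have h7 : 4 * C * C ≤ C * (c * ln * (r * sn)) := by nlinarith [h3c, h6]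
    have h8' : 4 * C ≤ c * ln * (r * sn) := by
      have := (mul_le_mul_iff_right₀ hC).mp (by linarith [h7] : C * (4 * C) ≤ C * (c * ln * (r * sn)))
      linarith
    nlinarith [h8', hC, mul_pos (mul_pos hr0 hsn0) (mul_pos hc hln0)]
  rw [hMeq, ← mul_div_assoc, div_le_iff₀ (by positivity : (0:ℝ) < c * sn * ln)]
  have h7 := mul_le_mul_of_nonneg_right h5 (mul_nonneg (sq_nonneg ε) hr0.le)
  nlinarith [h7]

private lemma final_ineq' (ρ M Dz S12 QQ ε nn L : ℝ) (hρ0 : 0 < ρ) (hn0 : 0 < nn)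
    (hM0 : 0 ≤ M) (hε0 : 0 < ε)
    (hq : ρ / 2 * Dz ≤ QQ) (hs2 : -(2 * M / ρ ^ 2 * (1 / nn)) ≤ S12)
    (hL : 2 * ε < L) (hCS : L ^ 2 ≤ nn * Dz)
    (h8 : 8 * M ≤ 3 * (ρ * ρ * ρ) * ε ^ 2) :
    ρ / 8 * Dz < S12 + (S12 + QQ) := by
  have hL2 : 4 * ε ^ 2 < L ^ 2 := by nlinarith
  have hd : 4 * ε ^ 2 / nn < Dz := by
    rw [div_lt_iff₀ hn0]
    nlinarith [hL2, hCS]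
  have hMρ : 4 * M / ρ ^ 2 ≤ 3 / 2 * ρ * ε ^ 2 := by
    rw [div_le_iff₀ (by positivity : (0:ℝ) < ρ ^ 2)]
    nlinarith [h8]
  have h1n : (0:ℝ) < 1 / nn := by positivity
  have hfin : 4 * M / ρ ^ 2 * (1 / nn) < 3 * ρ / 8 * Dz := by
    calc 4 * M / ρ ^ 2 * (1 / nn) ≤ 3 / 2 * ρ * ε ^ 2 * (1 / nn) :=
          mul_le_mul_of_nonneg_right hMρ h1n.le
      _ = 3 * ρ / 8 * (4 * ε ^ 2 / nn) := by ring
      _ < 3 * ρ / 8 * Dz := by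
          apply mul_lt_mul_of_pos_left hd (by positivity)
  set X : ℝ := M / ρ ^ 2 * (1 / nn) with hX
  have e1 : 2 * M / ρ ^ 2 * (1 / nn) = 2 * X := by rw [hX]; ring
  have e2 : 4 * M / ρ ^ 2 * (1 / nn) = 4 * X := by rw [hX]; ring
  rw [e1] at hs2
  rw [e2] at hfin
  linarith [hfin, hq, hs2]

private lemma fin_conv (n : ℕ) (η : ℝ) (v u : ℕ → ℝ) :
    (∑ i : Fin n, ∑ j : Fin n, v i * η ^ (((i : ℤ) - (j : ℤ)).natAbs) * u j)
    = ∑ i ∈ Finset.range n, ∑ j ∈ Finset.range n, v i * η ^ (((i : ℤ) - (j : ℤ)).natAbs) * u j := by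
  have hin : ∀ i : Fin n, (∑ j : Fin n, v i * η ^ ((((i:ℕ):ℤ) - ((j:ℕ):ℤ)).natAbs) * u j)
      = ∑ j ∈ Finset.range n, v i * η ^ ((((i:ℕ):ℤ) - ((j:ℕ):ℤ)).natAbs) * u j :=
    fun i => Fin.sum_univ_eq_sum_range (fun j => v i * η ^ ((((i:ℕ):ℤ) - ((j:ℕ):ℤ)).natAbs) * u j) n
  rw [Finset.sum_congr rfl (fun i _ => hin i)]
  exact Fin.sum_univ_eq_sum_range
    (fun i => ∑ j ∈ Finset.range n, v i * η ^ ((((i:ℕ):ℤ) - ((j:ℕ):ℤ)).natAbs) * u j) n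

/-- separation in the expected test statistic, path case.
For all constants `C, c > 0` there is `N` such that for all `n ≥ N` and
`ε, ρ ∈ (0,1]` with `ρ ≥ (c/C)^{2/3}·(log n)^{2/3}/(n^{1/3} ε^{4/3})`, setting
`η = 1 − ρ` and `m = c·√n·(log n)²/(ε² ρ^{3/2})`: if `μ` is a probability vector
with `‖μ‖_∞ ≤ C log n/m` whose TV distance from uniform exceeds `ε`, then with
`z = μ − ν` (`ν` uniform) and `A_{ij} = η^{|i−j|}`,
`μᵀ A μ > νᵀ A ν + (ρ/8)·‖z‖₂²`. -/
theorem separation_expected_value_path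
    (C c : ℝ) (hC : 0 < C) (hc : 0 < c) :
    ∃ N : ℕ, ∀ n : ℕ, N ≤ n → ∀ ε ρ : ℝ,
      0 < ε → ε ≤ 1 → 0 < ρ → ρ ≤ 1 →
      (c / C) ^ ((2 : ℝ) / 3) * (Real.log n) ^ ((2 : ℝ) / 3) /
          ((n : ℝ) ^ ((1 : ℝ) / 3) * ε ^ ((4 : ℝ) / 3)) ≤ ρ →
      ∀ η m : ℝ, η = 1 - ρ →
        m = c * Real.sqrt n * (Real.log n) ^ 2 / (ε ^ 2 * ρ ^ ((3 : ℝ) / 2)) →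
      ∀ μ : Fin n → ℝ, (∀ i, 0 ≤ μ i) → (∑ i, μ i = 1) →
        (∀ i, μ i ≤ C * Real.log n / m) →
        ε < (1 / 2) * ∑ i, |μ i - 1 / n| →
        (∑ i : Fin n, ∑ j : Fin n,
            (1 / n : ℝ) * η ^ (((i : ℤ) - (j : ℤ)).natAbs) * (1 / n))
            + (ρ / 8) * ∑ i, (μ i - 1 / n) ^ 2
          < ∑ i : Fin n, ∑ j : Fin n,
              μ i * η ^ (((i : ℤ) - (j : ℤ)).natAbs) * μ j := by
  refine ⟨max 3 ⌈Real.exp (2 * C / c + 2)⌉₊, ?_⟩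
  intro n hn ε ρ hε0 hε1 hρ0 hρ1 hρX η m hη hm μ hμ0 hμ1 hμM hTV
  -- basic facts
  have hn3 : 3 ≤ n := le_trans (le_max_left _ _) hn
  have hn0 : (0:ℝ) < n := by exact_mod_cast lt_of_lt_of_le (by norm_num) hn3
  have hn1 : (1:ℝ) < n := by exact_mod_cast lt_of_lt_of_le (by norm_num) hn3
  set ln : ℝ := Real.log n with hlndef
  set sn : ℝ := Real.sqrt n with hsndef
  have hln0 : 0 < ln := Real.log_pos hn1
  have hsn0 : 0 < sn := Real.sqrt_pos.mpr hn0
  have hln : 2 * C / c + 2 ≤ ln := by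
    have h1 : (⌈Real.exp (2 * C / c + 2)⌉₊ : ℝ) ≤ n := by
      exact_mod_cast le_trans (le_max_right 3 _) hn
    exact (Real.le_log_iff_exp_le hn0).mpr (le_trans (Nat.le_ceil _) h1)
  clear hn
  have hη0' : 0 ≤ η := by rw [hη]; linarith
  have hη1' : η < 1 := by rw [hη]; linarith
  have h1mη : 1 - η = ρ := by rw [hη]; ring
  set r : ℝ := ρ ^ ((3:ℝ)/2) with hrdef
  have hr0 : 0 < r := Real.rpow_pos_of_pos hρ0 _
  have hden2 : 0 < c * sn * ln := mul_pos (mul_pos hc hsn0) hln0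
  have hm0 : 0 < m := by
    rw [hm]
    apply div_pos
    · exact mul_pos (mul_pos hc hsn0) (pow_pos hln0 2)
    · exact mul_pos (pow_pos hε0 2) hr0
  set M : ℝ := C * Real.log n / m with hMdef
  have hMeq : M = C * ε^2 * r / (c * sn * ln) := by
    rw [hMdef, hm, div_div_eq_mul_div]
    rw [div_eq_div_iff (ne_of_gt (mul_pos (mul_pos hc hsn0) (pow_pos hln0 2))) (ne_of_gt hden2)]
    ring
  have hM0 : 0 ≤ M := by
    rw [hMeq]
    exact div_nonneg (by positivity) (le_of_lt hden2)
  clear_value ln sn r M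
  -- rpow computation: ρ^(3/2) ≥ (c/C)·ln/(sn·ε²)
  have hr1 : (c/C) * ln / (sn * ε^2) ≤ r := by
    have hA0 : (0:ℝ) ≤ (c / C) ^ ((2:ℝ)/3) := Real.rpow_nonneg (by positivity) _
    have hB0 : (0:ℝ) ≤ ln ^ ((2:ℝ)/3) := Real.rpow_nonneg hln0.le _
    have hD0 : (0:ℝ) ≤ (n:ℝ) ^ ((1:ℝ)/3) := Real.rpow_nonneg hn0.le _
    have hE0 : (0:ℝ) ≤ ε ^ ((4:ℝ)/3) := Real.rpow_nonneg hε0.le _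
    have hXnn : (0:ℝ) ≤ (c / C) ^ ((2:ℝ)/3) * ln ^ ((2:ℝ)/3) / ((n:ℝ) ^ ((1:ℝ)/3) * ε ^ ((4:ℝ)/3)) :=
      div_nonneg (mul_nonneg hA0 hB0) (mul_nonneg hD0 hE0)
    have h32 := Real.rpow_le_rpow hXnn hρX (by norm_num : (0:ℝ) ≤ 3/2)
    rw [Real.div_rpow (mul_nonneg hA0 hB0) (mul_nonneg hD0 hE0),
        Real.mul_rpow hA0 hB0, Real.mul_rpow hD0 hE0,
        ← Real.rpow_mul (by positivity : (0:ℝ) ≤ c / C),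
        ← Real.rpow_mul hln0.le, ← Real.rpow_mul hn0.le, ← Real.rpow_mul hε0.le] at h32
    norm_num at h32
    rw [← Real.sqrt_eq_rpow] at h32
    rw [hrdef, hsndef]
    exact h32
  -- numeric consequences
  have hρ3 : ρ * ρ * ρ = r * r := by
    have h33 : r * r = ρ ^ ((3:ℝ)/2 + (3:ℝ)/2) := by
      rw [hrdef]; exact (Real.rpow_add hρ0 _ _).symm
    rw [show (3:ℝ)/2 + (3:ℝ)/2 = ((3:ℕ):ℝ) by norm_num, Real.rpow_natCast] at h33
    rw [h33]; ring
  have h8 : 8 * M ≤ 3 * (ρ * ρ * ρ) * ε ^ 2 := by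
    rw [hρ3]
    exact numeric8' C c ε sn ln r M hC hc hε0 hε1 hsn0 hln0 hr0 hln hr1 hMeq
  clear hρX hrdef hsndef hlndef hMdef hm hρ3 hr1 hln
  -- structural part
  set w : ℕ → ℝ := fun k => if h : k < n then μ ⟨k, h⟩ else 0 with hwdef
  set z : ℕ → ℝ := fun k => w k - 1 / (n:ℝ) with hzdef
  have hμw : ∀ i : Fin n, μ i = w i := by
    intro i
    rw [hwdef]
    simp [i.isLt]
  have hwz : ∀ k, w k = 1 / (n:ℝ) + z k := by intro k; rw [hzdef]; ring
  have hzw : ∀ k, z k = w k - 1 / (n:ℝ) := by intro k; rw [hzdef]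
  -- sums conversions
  have hGeq : (∑ i : Fin n, ∑ j : Fin n,
        (1 / n : ℝ) * η ^ (((i : ℤ) - (j : ℤ)).natAbs) * (1 / n))
      = ∑ i ∈ range n, ∑ j ∈ range n,
        (1 / (n:ℝ)) * η ^ (((i : ℤ) - (j : ℤ)).natAbs) * (1 / (n:ℝ)) :=
    fin_conv n η (fun _ => 1 / (n:ℝ)) (fun _ => 1 / (n:ℝ))
  have hQeq : (∑ i : Fin n, ∑ j : Fin n, μ i * η ^ (((i : ℤ) - (j : ℤ)).natAbs) * μ j)
      = ∑ i ∈ range n, ∑ j ∈ range n, w i * η ^ (((i : ℤ) - (j : ℤ)).natAbs) * w j := by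
    have h1 : (∑ i : Fin n, ∑ j : Fin n, μ i * η ^ (((i : ℤ) - (j : ℤ)).natAbs) * μ j)
        = ∑ i : Fin n, ∑ j : Fin n, w i * η ^ (((i : ℤ) - (j : ℤ)).natAbs) * w j := by
      apply Finset.sum_congr rfl; intro i _
      apply Finset.sum_congr rfl; intro j _
      rw [hμw i, hμw j]
    rw [h1]
    exact fin_conv n η w w
  have hDeq : (∑ i : Fin n, (μ i - 1 / (n:ℝ)) ^ 2) = ∑ i ∈ range n, (z i) ^ 2 := by
    have h1 : (∑ i : Fin n, (μ i - 1 / (n:ℝ)) ^ 2) = ∑ i : Fin n, (z (i:ℕ)) ^ 2 := by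
      apply Finset.sum_congr rfl; intro i _
      rw [hμw i, hzw]
    rw [h1]
    exact Fin.sum_univ_eq_sum_range (fun k => (z k) ^ 2) n
  have hTVeq : (∑ i : Fin n, |μ i - 1 / (n:ℝ)|) = ∑ i ∈ range n, |z i| := by
    have h1 : (∑ i : Fin n, |μ i - 1 / (n:ℝ)|) = ∑ i : Fin n, |z (i:ℕ)| := by
      apply Finset.sum_congr rfl; intro i _
      rw [hμw i, hzw]
    rw [h1]
    exact Fin.sum_univ_eq_sum_range (fun k => |z k|) n
  -- sum of z is zero
  have hsumw : ∑ i ∈ range n, w i = 1 := by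
    rw [← Fin.sum_univ_eq_sum_range (fun k => w k) n]
    rw [← Finset.sum_congr rfl (fun (i : Fin n) _ => hμw i)]
    exact hμ1
  have hconst : ∑ _i ∈ range n, (1 / (n:ℝ)) = 1 := by
    rw [Finset.sum_const, card_range, nsmul_eq_mul]
    field_simp
  have hz0 : ∑ i ∈ range n, z i = 0 := by
    have h1 : ∑ i ∈ range n, z i
        = (∑ i ∈ range n, w i) - ∑ _i ∈ range n, (1 / (n:ℝ)) := by
      rw [← Finset.sum_sub_distrib]
    rw [h1, hsumw, hconst]
    ring
  have hzM : ∀ j ∈ range n, z j ≤ M := by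
    intro j hj
    simp only [mem_range] at hj
    have hwj : w j = μ ⟨j, hj⟩ := by rw [hwdef]; simp [hj]
    have h1 : z j = μ ⟨j, hj⟩ - 1 / (n:ℝ) := by rw [hzw, hwj]
    have h2 : (0:ℝ) < 1 / n := by positivity
    have h3 := hμM ⟨j, hj⟩
    rw [h1]
    linarith
  -- bilinear expansion
  set G : ℝ := ∑ i ∈ range n, ∑ j ∈ range n,
      (1 / (n:ℝ)) * η ^ (((i : ℤ) - (j : ℤ)).natAbs) * (1 / (n:ℝ)) with hGdef
  set S12 : ℝ := ∑ i ∈ range n, ∑ j ∈ range n,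
      (1 / (n:ℝ)) * η ^ (((i : ℤ) - (j : ℤ)).natAbs) * z j with hS12def
  set S21 : ℝ := ∑ i ∈ range n, ∑ j ∈ range n,
      z i * η ^ (((i : ℤ) - (j : ℤ)).natAbs) * (1 / (n:ℝ)) with hS21def
  set QQ : ℝ := ∑ i ∈ range n, ∑ j ∈ range n,
      z i * η ^ (((i : ℤ) - (j : ℤ)).natAbs) * z j with hQQdef
  have hsplit4 : ∑ i ∈ range n, ∑ j ∈ range n, w i * η ^ (((i : ℤ) - (j : ℤ)).natAbs) * w j
      = G + (S12 + (S21 + QQ)) := by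
    have hpt : ∀ i ∈ range n, ∀ j ∈ range n,
        w i * η ^ (((i : ℤ) - (j : ℤ)).natAbs) * w j
        = (1 / (n:ℝ)) * η ^ (((i : ℤ) - (j : ℤ)).natAbs) * (1 / (n:ℝ))
          + ((1 / (n:ℝ)) * η ^ (((i : ℤ) - (j : ℤ)).natAbs) * z j
            + (z i * η ^ (((i : ℤ) - (j : ℤ)).natAbs) * (1 / (n:ℝ))
              + z i * η ^ (((i : ℤ) - (j : ℤ)).natAbs) * z j)) := by
      intro i _ j _
      rw [hwz i, hwz j]
      ring
    rw [Finset.sum_congr rfl (fun i hi => Finset.sum_congr rfl (fun j hj => hpt i hi j hj))]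
    simp only [Finset.sum_add_distrib]
    rfl
  have hsym : S21 = S12 := by
    rw [hS21def, hS12def, Finset.sum_comm]
    apply Finset.sum_congr rfl; intro x _
    apply Finset.sum_congr rfl; intro y _
    rw [natAbs_comm''' y x]
    ring
  -- cross term bound
  have hS12eq : S12 = (∑ j ∈ range n,
      (∑ i ∈ range n, η ^ (((i : ℤ) - (j : ℤ)).natAbs)) * z j) * (1 / (n:ℝ)) := by
    rw [hS12def, Finset.sum_comm]
    have hpt : ∀ j ∈ range n,
        (∑ i ∈ range n, (1 / (n:ℝ)) * η ^ (((i : ℤ) - (j : ℤ)).natAbs) * z j)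
        = (∑ i ∈ range n, η ^ (((i : ℤ) - (j : ℤ)).natAbs)) * z j * (1 / (n:ℝ)) := by
      intro j _
      rw [Finset.sum_mul, Finset.sum_mul]
      apply Finset.sum_congr rfl; intro i _
      ring
    rw [Finset.sum_congr rfl hpt, ← Finset.sum_mul]
  have hcross := cross_bound' n η hη0' hη1' z M hM0 hzM hz0
  rw [h1mη] at hcross
  have hs2 : -(2 * M / ρ ^ 2 * (1 / (n:ℝ))) ≤ S12 := by
    rw [hS12eq]
    have h1n : (0:ℝ) ≤ 1 / n := by positivity
    have h2 := mul_le_mul_of_nonneg_right hcross h1n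
    calc -(2 * M / ρ ^ 2 * (1 / (n:ℝ)))
        = -(2 * M / ρ ^ 2) * (1 / (n:ℝ)) := by ring
      _ ≤ _ := h2
  -- quadratic form bound
  have hq : ρ / 2 * (∑ i ∈ range n, (z i) ^ 2) ≤ QQ := by
    have h1 := quad_lower' n η hη0' hη1'.le z
    rw [h1mη] at h1
    exact h1
  -- Cauchy-Schwarz
  set L : ℝ := ∑ i ∈ range n, |z i| with hLdef
  have hL : 2 * ε < L := by
    rw [hTVeq] at hTV
    linarith
  have hCS : L ^ 2 ≤ (n:ℝ) * ∑ i ∈ range n, (z i) ^ 2 := by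
    have h1 : L = ∑ i ∈ range n, (1:ℝ) * |z i| := by
      rw [hLdef]
      exact Finset.sum_congr rfl (fun i _ => (one_mul _).symm)
    have h2 := Finset.sum_mul_sq_le_sq_mul_sq (range n) (fun _ => (1:ℝ)) (fun i => |z i|)
    have h3 : (∑ _i ∈ range n, ((1:ℝ)) ^ 2) = (n:ℝ) := by
      simp [card_range]
    have h4 : (∑ i ∈ range n, |z i| ^ 2) = ∑ i ∈ range n, (z i) ^ 2 :=
      Finset.sum_congr rfl (fun i _ => sq_abs _)
    rw [h3, h4] at h2
    rw [h1]
    exact h2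
  -- conclude
  have key := final_ineq' ρ M (∑ i ∈ range n, (z i) ^ 2) S12 QQ ε (n:ℝ) L
    hρ0 hn0 hM0 hε0 hq hs2 hL hCS h8
  rw [hQeq, hsplit4, hGeq, hDeq, hsym]
  linarith [key]
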